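/- Fix a real number p > 0 and let ψ(t) = (1 + (t + √(t²+4t))/2)^{p/2} + (1 + (t − √(t²+4t))/2)^{p/2} for t ≥ 0. Then for all 0 ≤ t < 4, ψ(t) = Σ_{n≥0} λ_n tⁿ, where λ_n = (2/(2n)!) · ∏_{k=0}^{n−1} (p²/4 − k²) (so λ_0 = 2), the series converging absolutely. -/

import Mathlib

/-- The function `ψ(t) = (1 + (t + √(t²+4t))/2)^{p/2} + (1 + (t − √(t²+4t))/2)^{p/2}`. -/
noncomputable def psiFun (p : ℝ) (t : ℝ) : ℝ :=
  (1 + (t + Real.sqrt (t ^ 2 + 4 * t)) / 2) ^ (p / 2) +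
    (1 + (t - Real.sqrt (t ^ 2 + 4 * t)) / 2) ^ (p / 2)

/-- The coefficients `λ_n = (2/(2n)!) ∏_{k=0}^{n−1} (p²/4 − k²)`. -/
noncomputable def psiCoeff (p : ℝ) (n : ℕ) : ℝ :=
  (2 / Nat.factorial (2 * n)) * ∏ k ∈ Finset.range n, (p ^ 2 / 4 - (k : ℝ) ^ 2)

open Filter Set

noncomputable def cc (p : ℝ) (n : ℕ) : ℝ := psiCoeff p n * 4 ^ n

lemma cc_succ (p : ℝ) (n : ℕ) :
    cc p (n + 1) * ((2*(n:ℝ)+1) * (2*(n:ℝ)+2)) = (p^2 - (2*(n:ℝ))^2) * cc p n := by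
  have h1 : ((2 * (n+1)).factorial : ℝ) = (2*(n:ℝ)+2) * ((2*(n:ℝ)+1) * ((2*n).factorial : ℝ)) := by
    have h : 2 * (n+1) = (2*n+1) + 1 := by ring
    rw [h, Nat.factorial_succ, Nat.factorial_succ]
    push_cast; ring
  have h2 : ((2*n).factorial : ℝ) ≠ 0 := Nat.cast_ne_zero.2 (Nat.factorial_ne_zero _)
  simp only [cc, psiCoeff, Finset.prod_range_succ, h1]
  field_simp
  ring

lemma cc_abs_succ_le (p : ℝ) {n : ℕ} (hn : p^2 ≤ n) : |cc p (n+1)| ≤ |cc p n| := by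
  have hpos : (0:ℝ) < (2*(n:ℝ)+1) * (2*(n:ℝ)+2) := by positivity
  have h := cc_succ p n
  have habs : |cc p (n+1)| * ((2*(n:ℝ)+1) * (2*(n:ℝ)+2)) = |p^2 - (2*(n:ℝ))^2| * |cc p n| := by
    rw [← abs_of_pos hpos, ← abs_mul, h, abs_mul]
  have hn0 : (0:ℝ) ≤ n := Nat.cast_nonneg n
  have hle : |p^2 - (2*(n:ℝ))^2| ≤ (2*(n:ℝ)+1) * (2*(n:ℝ)+2) := by
    rw [abs_le]
    constructor <;> nlinarith [sq_nonneg p]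
  nlinarith [abs_nonneg (cc p n), abs_nonneg (cc p (n+1))]

lemma cc_bdd (p : ℝ) : ∃ C, ∀ n, |cc p n| ≤ C := by
  set N := ⌈p^2⌉₊ with hN
  refine ⟨∑ k ∈ Finset.range (N+1), |cc p k|, ?_⟩
  intro n
  induction n with
  | zero =>
      apply Finset.single_le_sum (f := fun k => |cc p k|) (fun i _ => abs_nonneg _)
      exact Finset.mem_range.2 (Nat.succ_pos N)
  | succ m ih =>
    rcases le_or_gt (m+1) N with h | h
    · apply Finset.single_le_sum (f := fun k => |cc p k|) (fun i _ => abs_nonneg _)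
      exact Finset.mem_range.2 (by omega)
    · have hm : p^2 ≤ m := by
        have h1 : p^2 ≤ (N:ℝ) := Nat.le_ceil _
        have h2 : (N:ℝ) ≤ m := by exact_mod_cast Nat.lt_succ_iff.mp h
        linarith
      exact le_trans (cc_abs_succ_le p hm) ih

lemma summable_geom_sq {x : ℝ} (h0 : 0 ≤ x) (h1 : x < 1) :
    Summable fun n : ℕ => ((n:ℝ)+1)^2 * x^n := by
  have hx : ‖x‖ < 1 := by rwa [Real.norm_eq_abs, abs_of_nonneg h0]
  have h2 := summable_pow_mul_geometric_of_norm_lt_one (R := ℝ) 2 hx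
  have h1' := summable_pow_mul_geometric_of_norm_lt_one (R := ℝ) 1 hx
  have h0' : Summable fun n : ℕ => x ^ n := summable_geometric_of_norm_lt_one hx
  have := (h2.add (h1'.mul_left 2)).add h0'
  refine this.congr fun n => ?_
  push_cast
  ring

lemma cc_summable_aux (p : ℝ) {x : ℝ} (h0 : 0 ≤ x) (h1 : x < 1) :
    Summable fun n : ℕ => ((n:ℝ)+1)^2 * |cc p n| * x^n := by
  obtain ⟨C, hC⟩ := cc_bdd p
  refine Summable.of_nonneg_of_le (fun n => by positivity) (fun n => ?_)
    ((summable_geom_sq h0 h1).mul_left C)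
  calc ((n:ℝ)+1)^2 * |cc p n| * x^n ≤ ((n:ℝ)+1)^2 * C * x^n := by
        have h1 : (0:ℝ) ≤ ((n:ℝ)+1)^2 := by positivity
        have h2 : (0:ℝ) ≤ x^n := by positivity
        exact mul_le_mul_of_nonneg_right (mul_le_mul_of_nonneg_left (hC n) h1) h2
    _ = C * (((n:ℝ)+1)^2 * x^n) := by ring

noncomputable def GG (p : ℝ) (z : ℝ) : ℝ := ∑' n : ℕ, cc p n * z ^ (2*n)
noncomputable def GG1 (p : ℝ) (z : ℝ) : ℝ :=
  ∑' n : ℕ, cc p n * (((2*n : ℕ) : ℝ) * z ^ (2*n - 1))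
noncomputable def GG2 (p : ℝ) (z : ℝ) : ℝ :=
  ∑' n : ℕ, cc p n * (((2*n : ℕ) : ℝ) * (((2*n - 1 : ℕ) : ℝ) * z ^ (2*n - 2)))

lemma pow_sub_le {r : ℝ} (h2 : 1/2 ≤ r) {k m : ℕ} (hkm : m ≤ k) (hm : m ≤ 2) :
    r ^ (k - m) ≤ 4 * r ^ k := by
  have hr0 : (0:ℝ) ≤ r := by linarith
  have hkey : r ^ k = r ^ (k - m) * r ^ m := by
    rw [← pow_add]; congr 1; omega
  have hm4 : (1:ℝ)/4 ≤ r ^ m := by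
    have h : ((1:ℝ)/2) ^ m ≤ r ^ m := pow_le_pow_left₀ (by norm_num) h2 m
    have h' : (1:ℝ)/4 ≤ ((1:ℝ)/2) ^ m := by
      interval_cases m <;> norm_num
    linarith
  nlinarith [pow_nonneg hr0 (k - m), pow_nonneg hr0 k]

lemma bound0 (p : ℝ) {r : ℝ} (h2 : 1/2 ≤ r) {x : ℝ} (hx : |x| ≤ r) (n : ℕ) :
    ‖cc p n * x ^ (2*n)‖ ≤ 16*((n:ℝ)+1)^2 * |cc p n| * (r^2)^n := by
  have hr0 : (0:ℝ) ≤ r := by linarith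
  have h1 : ‖cc p n * x ^ (2*n)‖ = |cc p n| * |x| ^ (2*n) := by
    rw [Real.norm_eq_abs, abs_mul, abs_pow]
  rw [h1, ← pow_mul]
  have hxp : |x| ^ (2*n) ≤ r ^ (2*n) := pow_le_pow_left₀ (abs_nonneg x) hx _
  have h16 : (1:ℝ) ≤ 16*((n:ℝ)+1)^2 := by nlinarith [sq_nonneg ((n:ℝ)+1), Nat.cast_nonneg (α := ℝ) n]
  calc |cc p n| * |x| ^ (2*n) ≤ |cc p n| * r ^ (2*n) := by
        exact mul_le_mul_of_nonneg_left hxp (abs_nonneg _)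
    _ = 1 * (|cc p n| * r ^ (2*n)) := by ring
    _ ≤ (16*((n:ℝ)+1)^2) * (|cc p n| * r ^ (2*n)) := by
        exact mul_le_mul_of_nonneg_right h16 (by positivity)
    _ = 16*((n:ℝ)+1)^2 * |cc p n| * r ^ (2*n) := by ring

lemma bound1 (p : ℝ) {r : ℝ} (h2 : 1/2 ≤ r) {x : ℝ} (hx : |x| ≤ r) (n : ℕ) :
    ‖cc p n * (((2*n : ℕ) : ℝ) * x ^ (2*n - 1))‖ ≤ 16*((n:ℝ)+1)^2 * |cc p n| * (r^2)^n := by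
  have hr0 : (0:ℝ) ≤ r := by linarith
  rcases Nat.eq_zero_or_pos n with rfl | hn
  · simp
  have h1 : ‖cc p n * (((2*n : ℕ) : ℝ) * x ^ (2*n - 1))‖
      = |cc p n| * (2*(n:ℝ) * |x| ^ (2*n - 1)) := by
    rw [Real.norm_eq_abs, abs_mul, abs_mul, abs_pow]
    push_cast
    rw [abs_of_nonneg (by positivity : (0:ℝ) ≤ 2*(n:ℝ))]
  rw [h1, ← pow_mul]
  have hxp : |x| ^ (2*n-1) ≤ r ^ (2*n-1) := pow_le_pow_left₀ (abs_nonneg x) hx _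
  have hps : r ^ (2*n-1) ≤ 4 * r ^ (2*n) := pow_sub_le h2 (by omega) (by omega)
  have hcoef : 2*(n:ℝ) * 4 ≤ 16*((n:ℝ)+1)^2 := by nlinarith [sq_nonneg ((n:ℝ)-1), Nat.cast_nonneg (α := ℝ) n]
  calc |cc p n| * (2*(n:ℝ) * |x| ^ (2*n-1))
      ≤ |cc p n| * (2*(n:ℝ) * (4 * r ^ (2*n))) := by
        have : 2*(n:ℝ) * |x| ^ (2*n-1) ≤ 2*(n:ℝ) * (4 * r ^ (2*n)) :=
          mul_le_mul_of_nonneg_left (le_trans hxp hps) (by positivity)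
        exact mul_le_mul_of_nonneg_left this (abs_nonneg _)
    _ = (2*(n:ℝ)*4) * (|cc p n| * r ^ (2*n)) := by ring
    _ ≤ (16*((n:ℝ)+1)^2) * (|cc p n| * r ^ (2*n)) :=
        mul_le_mul_of_nonneg_right hcoef (by positivity)
    _ = 16*((n:ℝ)+1)^2 * |cc p n| * r ^ (2*n) := by ring

lemma bound2 (p : ℝ) {r : ℝ} (h2 : 1/2 ≤ r) {x : ℝ} (hx : |x| ≤ r) (n : ℕ) :
    ‖cc p n * (((2*n : ℕ) : ℝ) * (((2*n - 1 : ℕ) : ℝ) * x ^ (2*n - 2)))‖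
      ≤ 16*((n:ℝ)+1)^2 * |cc p n| * (r^2)^n := by
  have hr0 : (0:ℝ) ≤ r := by linarith
  rcases Nat.eq_zero_or_pos n with rfl | hn
  · simp
  have hcast : ((2*n - 1 : ℕ) : ℝ) = 2*(n:ℝ) - 1 := by
    push_cast [Nat.cast_sub (by omega : 1 ≤ 2*n)]; ring
  have h1 : ‖cc p n * (((2*n : ℕ) : ℝ) * (((2*n - 1 : ℕ) : ℝ) * x ^ (2*n - 2)))‖
      = |cc p n| * (2*(n:ℝ) * ((2*(n:ℝ) - 1) * |x| ^ (2*n - 2))) := by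
    rw [Real.norm_eq_abs, abs_mul, abs_mul, abs_mul, abs_pow, hcast]
    push_cast
    rw [abs_of_nonneg (by positivity : (0:ℝ) ≤ 2*(n:ℝ))]
    rw [abs_of_nonneg (by nlinarith [(Nat.one_le_cast.mpr hn : (1:ℝ) ≤ (n:ℝ))] : (0:ℝ) ≤ 2*(n:ℝ) - 1)]
  rw [h1, ← pow_mul]
  have hxp : |x| ^ (2*n-2) ≤ r ^ (2*n-2) := pow_le_pow_left₀ (abs_nonneg x) hx _
  have hps : r ^ (2*n-2) ≤ 4 * r ^ (2*n) := pow_sub_le h2 (by omega) (by omega)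
  have hn1 : (1:ℝ) ≤ (n:ℝ) := Nat.one_le_cast.mpr hn
  have hcoef : 2*(n:ℝ) * ((2*(n:ℝ)-1) * 4) ≤ 16*((n:ℝ)+1)^2 := by nlinarith
  calc |cc p n| * (2*(n:ℝ) * ((2*(n:ℝ)-1) * |x| ^ (2*n-2)))
      ≤ |cc p n| * (2*(n:ℝ) * ((2*(n:ℝ)-1) * (4 * r ^ (2*n)))) := by
        have h3 : (0:ℝ) ≤ 2*(n:ℝ)-1 := by linarith
        have : (2*(n:ℝ)-1) * |x| ^ (2*n-2) ≤ (2*(n:ℝ)-1) * (4 * r ^ (2*n)) :=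
          mul_le_mul_of_nonneg_left (le_trans hxp hps) h3
        exact mul_le_mul_of_nonneg_left (mul_le_mul_of_nonneg_left this (by positivity)) (abs_nonneg _)
    _ = (2*(n:ℝ) * ((2*(n:ℝ)-1) * 4)) * (|cc p n| * r ^ (2*n)) := by ring
    _ ≤ (16*((n:ℝ)+1)^2) * (|cc p n| * r ^ (2*n)) :=
        mul_le_mul_of_nonneg_right hcoef (by positivity)
    _ = 16*((n:ℝ)+1)^2 * |cc p n| * r ^ (2*n) := by ring

lemma u_summable (p : ℝ) {r : ℝ} (h0 : 0 ≤ r) (h1 : r < 1) :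
    Summable fun n : ℕ => 16*((n:ℝ)+1)^2 * |cc p n| * (r^2)^n := by
  have h0' : (0:ℝ) ≤ r^2 := by positivity
  have h1' : r^2 < 1 := by nlinarith
  refine ((cc_summable_aux p h0' h1').mul_left 16).congr fun n => by ring

lemma hasDerivAt_GG (p : ℝ) {z : ℝ} (hz : |z| < 1) : HasDerivAt (GG p) (GG1 p z) z := by
  set r := (|z| + 1) / 2 with hr
  have hz0 := abs_nonneg z
  have h2 : 1/2 ≤ r := by rw [hr]; linarith
  have hr1 : r < 1 := by rw [hr]; linarith
  have hr0 : (0:ℝ) ≤ r := by linarith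
  have hzr : |z| < r := by rw [hr]; linarith
  have hball : z ∈ Metric.ball (0:ℝ) r := by
    simpa [Metric.mem_ball, Real.dist_eq] using hzr
  apply hasDerivAt_of_tendstoUniformlyOn (l := (atTop : Filter (Finset ℕ))) (Metric.isOpen_ball)
    (f := fun (t : Finset ℕ) x => ∑ n ∈ t, cc p n * x ^ (2*n))
    (f' := fun (t : Finset ℕ) x => ∑ n ∈ t, cc p n * (((2*n:ℕ):ℝ) * x ^ (2*n-1)))
    ?_ ?_ ?_ hball
  · exact tendstoUniformlyOn_tsum (u_summable p hr0 hr1)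
      (fun n x hx => bound1 p h2 (le_of_lt (by simpa [Metric.mem_ball, Real.dist_eq] using hx)) n)
  · filter_upwards with t x hx
    exact HasDerivAt.fun_sum fun n _ => ((hasDerivAt_pow (2*n) x).const_mul (cc p n))
  · intro x hx
    have hxr : |x| < r := by simpa [Metric.mem_ball, Real.dist_eq] using hx
    have hs : Summable fun n => cc p n * x ^ (2*n) :=
      Summable.of_norm (Summable.of_nonneg_of_le (fun n => norm_nonneg _)
        (fun n => bound0 p h2 (le_of_lt hxr) n) (u_summable p hr0 hr1))
    exact hs.hasSum

lemma hasDerivAt_GG1 (p : ℝ) {z : ℝ} (hz : |z| < 1) : HasDerivAt (GG1 p) (GG2 p z) z := by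
  set r := (|z| + 1) / 2 with hr
  have hz0 := abs_nonneg z
  have h2 : 1/2 ≤ r := by rw [hr]; linarith
  have hr1 : r < 1 := by rw [hr]; linarith
  have hr0 : (0:ℝ) ≤ r := by linarith
  have hzr : |z| < r := by rw [hr]; linarith
  have hball : z ∈ Metric.ball (0:ℝ) r := by
    simpa [Metric.mem_ball, Real.dist_eq] using hzr
  apply hasDerivAt_of_tendstoUniformlyOn (l := (atTop : Filter (Finset ℕ))) (Metric.isOpen_ball)
    (f := fun (t : Finset ℕ) x => ∑ n ∈ t, cc p n * (((2*n:ℕ):ℝ) * x ^ (2*n-1)))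
    (f' := fun (t : Finset ℕ) x => ∑ n ∈ t,
      cc p n * (((2*n:ℕ):ℝ) * (((2*n-1:ℕ):ℝ) * x ^ (2*n-2))))
    ?_ ?_ ?_ hball
  · exact tendstoUniformlyOn_tsum (u_summable p hr0 hr1)
      (fun n x hx => bound2 p h2 (le_of_lt (by simpa [Metric.mem_ball, Real.dist_eq] using hx)) n)
  · filter_upwards with t x hx
    refine HasDerivAt.fun_sum fun n _ => ?_
    have h : 2*n - 1 - 1 = 2*n - 2 := by omega
    have hd := ((hasDerivAt_pow (2*n-1) x).const_mul (((2*n:ℕ):ℝ))).const_mul (cc p n)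
    rw [h] at hd
    exact hd
  · intro x hx
    have hxr : |x| < r := by simpa [Metric.mem_ball, Real.dist_eq] using hx
    have hs : Summable fun n => cc p n * (((2*n:ℕ):ℝ) * x ^ (2*n-1)) :=
      Summable.of_norm (Summable.of_nonneg_of_le (fun n => norm_nonneg _)
        (fun n => bound1 p h2 (le_of_lt hxr) n) (u_summable p hr0 hr1))
    exact hs.hasSum

noncomputable def T0 (p z : ℝ) (n : ℕ) : ℝ := cc p n * z ^ (2*n)
noncomputable def T1 (p z : ℝ) (n : ℕ) : ℝ := cc p n * (((2*n:ℕ):ℝ) * z ^ (2*n-1))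
noncomputable def T2 (p z : ℝ) (n : ℕ) : ℝ :=
  cc p n * (((2*n:ℕ):ℝ) * (((2*n-1:ℕ):ℝ) * z ^ (2*n-2)))
noncomputable def EE (p z : ℝ) (n : ℕ) : ℝ := (p^2 - (2*(n:ℝ))^2) * cc p n * z^(2*n)

lemma GG_ode (p : ℝ) {z : ℝ} (hz : |z| < 1) :
    (1 + z^2) * GG2 p z = p^2 * GG p z - z * GG1 p z := by
  set r := (|z| + 1) / 2 with hr
  have hz0 := abs_nonneg z
  have h2 : 1/2 ≤ r := by rw [hr]; linarith
  have hr1 : r < 1 := by rw [hr]; linarith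
  have hr0 : (0:ℝ) ≤ r := by linarith
  have hzr : |z| ≤ r := by rw [hr]; linarith
  have hx0 : (0:ℝ) ≤ z^2 := sq_nonneg z
  have hx1 : z^2 < 1 := by nlinarith [sq_abs z]
  have hS0 : Summable (T0 p z) :=
    Summable.of_norm (Summable.of_nonneg_of_le (fun n => norm_nonneg _)
      (fun n => bound0 p h2 hzr n) (u_summable p hr0 hr1))
  have hS1 : Summable (T1 p z) :=
    Summable.of_norm (Summable.of_nonneg_of_le (fun n => norm_nonneg _)
      (fun n => bound1 p h2 hzr n) (u_summable p hr0 hr1))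
  have hS2 : Summable (T2 p z) :=
    Summable.of_norm (Summable.of_nonneg_of_le (fun n => norm_nonneg _)
      (fun n => bound2 p h2 hzr n) (u_summable p hr0 hr1))
  have H0 : HasSum (T0 p z) (GG p z) := hS0.hasSum
  have H1 : HasSum (T1 p z) (GG1 p z) := hS1.hasSum
  have H2 : HasSum (T2 p z) (GG2 p z) := hS2.hasSum
  have hSe : Summable (EE p z) := by
    refine Summable.of_norm (Summable.of_nonneg_of_le (fun n => norm_nonneg _) (fun n => ?_)
      ((cc_summable_aux p hx0 hx1).mul_left (p^2+4)))
    have hzn : (0:ℝ) ≤ (z^2)^n := by positivity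
    have h1 : ‖EE p z n‖ = |p^2 - (2*(n:ℝ))^2| * |cc p n| * (z^2)^n := by
      simp only [EE, Real.norm_eq_abs, abs_mul]
      rw [pow_mul, abs_of_nonneg hzn]
    rw [h1]
    have h3 : |p^2 - (2*(n:ℝ))^2| ≤ (p^2+4)*((n:ℝ)+1)^2 := by
      rw [abs_le]
      have := Nat.cast_nonneg (α := ℝ) n
      constructor <;> nlinarith [sq_nonneg p, sq_nonneg ((n:ℝ)+1), sq_nonneg ((n:ℝ))]
    calc |p^2 - (2*(n:ℝ))^2| * |cc p n| * (z^2)^n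
        ≤ ((p^2+4)*((n:ℝ)+1)^2) * |cc p n| * (z^2)^n :=
          mul_le_mul_of_nonneg_right (mul_le_mul_of_nonneg_right h3 (abs_nonneg _)) hzn
      _ = (p^2+4) * (((n:ℝ)+1)^2 * |cc p n| * (z^2)^n) := by ring
  have He : HasSum (EE p z) (∑' n, EE p z n) := hSe.hasSum
  have hshift : ∀ n : ℕ, T2 p z (n+1) = EE p z n := by
    intro n
    simp only [T2, EE]
    rw [show 2*(n+1)-1 = 2*n+1 from by omega, show 2*(n+1)-2 = 2*n from by omega]
    push_cast
    linear_combination (z^(2*n)) * cc_succ p n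
  have Ht2 : HasSum (T2 p z) (∑' n, EE p z n) := by
    have hA : HasSum (fun n => T2 p z (n + 1)) (∑' n, EE p z n) := by
      have hfe : (fun n => T2 p z (n+1)) = EE p z := funext hshift
      rw [hfe]; exact He
    have h := (hasSum_nat_add_iff (f := T2 p z) 1).mp hA
    have h0 : T2 p z 0 = 0 := by simp [T2]
    simpa [h0] using h
  have hpt : ∀ n, EE p z n - T2 p z n
      = p^2 * T0 p z n - z * T1 p z n - (1+z^2) * T2 p z n := by
    intro n
    cases n with
    | zero => simp [EE, T0, T1, T2]
    | succ n =>
      simp only [EE, T0, T1, T2]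
      rw [show 2*(n+1)-1 = 2*n+1 from by omega, show 2*(n+1)-2 = 2*n from by omega]
      push_cast
      ring
  have Hd : HasSum (fun n => p^2 * T0 p z n - z * T1 p z n - (1+z^2) * T2 p z n) 0 := by
    have h := He.sub Ht2
    rw [sub_self] at h
    rwa [show (fun n => EE p z n - T2 p z n)
      = fun n => p^2 * T0 p z n - z * T1 p z n - (1+z^2) * T2 p z n from funext hpt] at h
  have Hc : HasSum (fun n => p^2 * T0 p z n - z * T1 p z n - (1+z^2) * T2 p z n)
      (p^2 * GG p z - z * GG1 p z - (1+z^2) * GG2 p z) :=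
    ((H0.mul_left _).sub (H1.mul_left _)).sub (H2.mul_left _)
  have := Hd.unique Hc
  linarith

noncomputable def gfun (p z : ℝ) : ℝ :=
  (Real.sqrt (1+z^2) + z) ^ p + (Real.sqrt (1+z^2) - z) ^ p
noncomputable def gfun1 (p z : ℝ) : ℝ :=
  p * ((Real.sqrt (1+z^2) + z) ^ p - (Real.sqrt (1+z^2) - z) ^ p) / Real.sqrt (1+z^2)

lemma S_pos (z : ℝ) : 0 < Real.sqrt (1+z^2) := Real.sqrt_pos.2 (by positivity)
lemma S_sq (z : ℝ) : Real.sqrt (1+z^2) ^ 2 = 1 + z^2 := Real.sq_sqrt (by positivity)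

lemma abs_lt_S (z : ℝ) : |z| < Real.sqrt (1+z^2) := by
  have h := Real.sqrt_lt_sqrt (sq_nonneg z) (by linarith [sq_nonneg z] : z^2 < 1+z^2)
  rwa [Real.sqrt_sq_eq_abs] at h

lemma A_pos (z : ℝ) : 0 < Real.sqrt (1+z^2) + z := by
  have h := abs_lt_S z; have := neg_abs_le z; linarith

lemma B_pos (z : ℝ) : 0 < Real.sqrt (1+z^2) - z := by
  have h := abs_lt_S z; have := le_abs_self z; linarith

lemma hasDerivAt_S (z : ℝ) :
    HasDerivAt (fun z : ℝ => Real.sqrt (1+z^2)) (z / Real.sqrt (1+z^2)) z := by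
  have h1 : HasDerivAt (fun z : ℝ => 1+z^2) (2*z) z := by
    simpa using ((hasDerivAt_pow 2 z).const_add 1)
  have h := (Real.hasDerivAt_sqrt (by positivity : (1:ℝ)+z^2 ≠ 0)).comp z h1
  refine h.congr_deriv ?_
  have := S_pos z
  field_simp

lemma hasDerivAt_Ap (p z : ℝ) :
    HasDerivAt (fun z => (Real.sqrt (1+z^2) + z) ^ p)
      (p * (Real.sqrt (1+z^2) + z) ^ p / Real.sqrt (1+z^2)) z := by
  have hA : HasDerivAt (fun z => Real.sqrt (1+z^2) + z) (z / Real.sqrt (1+z^2) + 1) z :=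
    (hasDerivAt_S z).add (hasDerivAt_id z)
  have h := hA.rpow_const (p := p) (Or.inl (ne_of_gt (A_pos z)))
  rw [Real.rpow_sub (A_pos z) p 1, Real.rpow_one] at h
  convert h using 1
  have hS0 : Real.sqrt (1+z^2) ≠ 0 := ne_of_gt (S_pos z)
  have hA0 : Real.sqrt (1+z^2) + z ≠ 0 := ne_of_gt (A_pos z)
  field_simp
  ring

lemma hasDerivAt_Bp (p z : ℝ) :
    HasDerivAt (fun z => (Real.sqrt (1+z^2) - z) ^ p)
      (-(p * (Real.sqrt (1+z^2) - z) ^ p) / Real.sqrt (1+z^2)) z := by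
  have hB : HasDerivAt (fun z => Real.sqrt (1+z^2) - z) (z / Real.sqrt (1+z^2) - 1) z :=
    (hasDerivAt_S z).sub (hasDerivAt_id z)
  have h := hB.rpow_const (p := p) (Or.inl (ne_of_gt (B_pos z)))
  rw [Real.rpow_sub (B_pos z) p 1, Real.rpow_one] at h
  convert h using 1
  have hS0 : Real.sqrt (1+z^2) ≠ 0 := ne_of_gt (S_pos z)
  have hB0 : Real.sqrt (1+z^2) - z ≠ 0 := ne_of_gt (B_pos z)
  field_simp
  ring

lemma hasDerivAt_gfun (p z : ℝ) : HasDerivAt (gfun p) (gfun1 p z) z := by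
  have h := (hasDerivAt_Ap p z).add (hasDerivAt_Bp p z)
  unfold gfun gfun1
  refine h.congr_deriv ?_
  ring

lemma hasDerivAt_gfun1 (p z : ℝ) :
    HasDerivAt (gfun1 p) ((p^2 * gfun p z - z * gfun1 p z) / (1+z^2)) z := by
  have hS0 : Real.sqrt (1+z^2) ≠ 0 := ne_of_gt (S_pos z)
  have hnum : HasDerivAt
      (fun z => p * ((Real.sqrt (1+z^2)+z)^p - (Real.sqrt (1+z^2)-z)^p))
      (p * (p * (Real.sqrt (1+z^2)+z)^p / Real.sqrt (1+z^2) -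
        -(p * (Real.sqrt (1+z^2)-z)^p) / Real.sqrt (1+z^2))) z :=
    ((hasDerivAt_Ap p z).sub (hasDerivAt_Bp p z)).const_mul p
  have h := hnum.div (hasDerivAt_S z) hS0
  unfold gfun1 gfun
  refine h.congr_deriv ?_
  set S := Real.sqrt (1+z^2) with hS
  have hsq : S^2 = 1+z^2 := S_sq z
  rw [← hsq]
  field_simp
  ring

lemma gfun_zero (p : ℝ) : gfun p 0 = 2 := by
  unfold gfun; norm_num

lemma gfun1_zero (p : ℝ) : gfun1 p 0 = 0 := by
  unfold gfun1; norm_num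

lemma GG_zero (p : ℝ) : GG p 0 = 2 := by
  rw [GG, tsum_eq_single 0]
  · simp [cc, psiCoeff]
  · intro n hn
    have h : 2*n ≠ 0 := by omega
    simp [zero_pow h]

lemma GG1_zero (p : ℝ) : GG1 p 0 = 0 := by
  rw [GG1]
  have h : ∀ n : ℕ, cc p n * (((2*n:ℕ):ℝ) * (0:ℝ) ^ (2*n-1)) = 0 := by
    intro n
    cases n with
    | zero => simp
    | succ n =>
      have h1 : 2*(n+1) - 1 ≠ 0 := by omega
      simp [zero_pow h1]
  rw [tsum_congr h, tsum_zero]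

lemma lipschitz_v (p : ℝ) (s : ℝ) :
    LipschitzWith (⟨p^2+1, by positivity⟩ : NNReal)
      (fun y : ℝ × ℝ => ((y.2, (p^2 * y.1 - s * y.2) / (1 + s^2)) : ℝ × ℝ)) := by
  apply LipschitzWith.of_dist_le_mul
  intro y y'
  simp only [NNReal.coe_mk, Prod.dist_eq, Real.dist_eq]
  change _ ≤ (p^2+1) * _
  set d1 := |y.1 - y'.1| with hd1
  set d2 := |y.2 - y'.2| with hd2
  have hd10 : 0 ≤ d1 := abs_nonneg _
  have hd20 : 0 ≤ d2 := abs_nonneg _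
  have hm1 : d1 ≤ max d1 d2 := le_max_left _ _
  have hm2 : d2 ≤ max d1 d2 := le_max_right _ _
  have hM0 : 0 ≤ max d1 d2 := le_trans hd10 hm1
  have h1s : (0:ℝ) < 1 + s^2 := by positivity
  apply max_le
  · nlinarith [sq_nonneg p]
  · have hnum : (p^2 * y.1 - s * y.2) / (1 + s^2) - (p^2 * y'.1 - s * y'.2) / (1 + s^2)
        = (p^2 * (y.1 - y'.1) - s * (y.2 - y'.2)) / (1 + s^2) := by
      rw [div_sub_div_same]; congr 1; ring
    rw [hnum, abs_div, abs_of_pos h1s, div_le_iff₀ h1s]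
    have habs : |p^2 * (y.1 - y'.1) - s * (y.2 - y'.2)| ≤ p^2 * d1 + |s| * d2 := by
      calc |p^2 * (y.1 - y'.1) - s * (y.2 - y'.2)|
          ≤ |p^2 * (y.1 - y'.1)| + |s * (y.2 - y'.2)| := abs_sub _ _
        _ = p^2 * d1 + |s| * d2 := by
            rw [abs_mul, abs_mul, abs_of_nonneg (sq_nonneg p), hd1, hd2]
    have hs1 : |s| ≤ 1 + s^2 := by nlinarith [sq_nonneg (|s| - 1), sq_abs s]
    nlinarith [mul_le_mul_of_nonneg_left hm1 (sq_nonneg p),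
      mul_le_mul_of_nonneg_left hm2 (abs_nonneg s),
      mul_le_mul_of_nonneg_right hs1 hM0,
      mul_nonneg (mul_nonneg (sq_nonneg p) hM0) (sq_nonneg s)]

lemma gfun_eq_GG (p : ℝ) {z : ℝ} (h0 : 0 ≤ z) (h1 : z < 1) : gfun p z = GG p z := by
  set v : ℝ → ℝ × ℝ → ℝ × ℝ :=
    fun s y => ((y.2, (p^2 * y.1 - s * y.2) / (1 + s^2)) : ℝ × ℝ) with hv
  have hmem : ∀ s ∈ Icc (0:ℝ) z, |s| < 1 := by
    intro s hs
    rw [abs_lt]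
    exact ⟨by linarith [hs.1], by linarith [hs.2]⟩
  have key : EqOn (fun s => ((gfun p s, gfun1 p s) : ℝ × ℝ))
      (fun s => ((GG p s, GG1 p s) : ℝ × ℝ)) (Icc 0 z) := by
    apply ODE_solution_unique (v := v) (K := ⟨p^2+1, by positivity⟩)
      (fun s => lipschitz_v p s)
    · intro s _
      exact ((hasDerivAt_gfun p s).prodMk (hasDerivAt_gfun1 p s)).continuousAt.continuousWithinAt
    · intro s _
      exact ((hasDerivAt_gfun p s).prodMk (hasDerivAt_gfun1 p s)).hasDerivWithinAt
    · intro s hs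
      have hs1 : |s| < 1 := hmem s hs
      exact (((hasDerivAt_GG p hs1).prodMk (hasDerivAt_GG1 p hs1)).continuousAt).continuousWithinAt
    · intro s hs
      have hs1 : |s| < 1 := hmem s (Ico_subset_Icc_self hs)
      have he : GG2 p s = (p^2 * GG p s - s * GG1 p s) / (1 + s^2) := by
        rw [eq_div_iff (by positivity : (1:ℝ)+s^2 ≠ 0)]
        linear_combination GG_ode p hs1
      have h := (hasDerivAt_GG p hs1).prodMk (hasDerivAt_GG1 p hs1)
      rw [he] at h
      exact h.hasDerivWithinAt
    · show ((gfun p 0, gfun1 p 0) : ℝ × ℝ) = (GG p 0, GG1 p 0)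
      rw [gfun_zero, gfun1_zero, GG_zero, GG1_zero]
  have := key (right_mem_Icc.mpr h0)
  exact congrArg Prod.fst this

/-- For `p > 0` and `0 ≤ t < 4`, `ψ(t) = Σ_{n ≥ 0} λ_n tⁿ`, the series converging
absolutely. -/
theorem psi_powerSeries (p : ℝ) (hp : 0 < p) (t : ℝ) (ht0 : 0 ≤ t) (ht4 : t < 4) :
    HasSum (fun n : ℕ => psiCoeff p n * t ^ n) (psiFun p t) ∧
      Summable (fun n : ℕ => |psiCoeff p n * t ^ n|) := by
  set z := Real.sqrt t / 2 with hzdef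
  have hz0 : 0 ≤ z := by rw [hzdef]; positivity
  have hts : Real.sqrt t ^ 2 = t := Real.sq_sqrt ht0
  have ht' : t = 4 * z^2 := by rw [hzdef, div_pow, hts]; ring
  have hz1 : z < 1 := by
    rw [hzdef]
    have h2 : Real.sqrt t < 2 := by
      rw [show (2:ℝ) = Real.sqrt 4 from
        by rw [show (4:ℝ) = 2^2 by norm_num, Real.sqrt_sq (by norm_num)]]
      exact Real.sqrt_lt_sqrt ht0 ht4
    linarith
  have hterm : ∀ n, psiCoeff p n * t^n = cc p n * z^(2*n) := by
    intro n
    rw [ht']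
    simp only [cc]
    rw [mul_pow, pow_mul]
    ring
  have hx1 : z^2 < 1 := by nlinarith
  have habs : Summable (fun n => |psiCoeff p n * t^n|) := by
    refine Summable.of_nonneg_of_le (fun n => abs_nonneg _) (fun n => ?_)
      (cc_summable_aux p (sq_nonneg z) hx1)
    rw [hterm n, abs_mul, pow_mul, abs_of_nonneg (by positivity : (0:ℝ) ≤ (z^2)^n)]
    have h16 : (1:ℝ) ≤ ((n:ℝ)+1)^2 := by nlinarith [Nat.cast_nonneg (α := ℝ) n]
    calc |cc p n| * (z^2)^n = 1 * (|cc p n| * (z^2)^n) := by ring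
      _ ≤ ((n:ℝ)+1)^2 * (|cc p n| * (z^2)^n) :=
          mul_le_mul_of_nonneg_right h16 (by positivity)
      _ = ((n:ℝ)+1)^2 * |cc p n| * (z^2)^n := by ring
  have hsummable : Summable (fun n => cc p n * z^(2*n)) :=
    (summable_abs_iff.mp habs).congr hterm
  have hsum : HasSum (fun n => cc p n * z^(2*n)) (GG p z) := hsummable.hasSum
  have hsqrt : Real.sqrt (t^2 + 4*t) = 4 * z * Real.sqrt (1+z^2) := by
    rw [show t^2 + 4*t = (4 * z * Real.sqrt (1+z^2))^2 from ?_,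
      Real.sqrt_sq (by positivity)]
    rw [mul_pow, mul_pow, S_sq z, ht']
    ring
  have hA : 1 + (t + Real.sqrt (t^2+4*t))/2 = (Real.sqrt (1+z^2) + z)^2 := by
    rw [hsqrt, ht']
    linear_combination (-1 : ℝ) * S_sq z
  have hB : 1 + (t - Real.sqrt (t^2+4*t))/2 = (Real.sqrt (1+z^2) - z)^2 := by
    rw [hsqrt, ht']
    linear_combination (-1 : ℝ) * S_sq z
  have hr : ∀ X : ℝ, 0 ≤ X → (X^2) ^ (p/2) = X ^ p := by
    intro X hX
    rw [← Real.rpow_natCast X 2, ← Real.rpow_mul hX]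
    congr 1
    push_cast
    ring
  have hpsi : psiFun p t = gfun p z := by
    rw [psiFun, gfun, hA, hB, hr _ (le_of_lt (A_pos z)), hr _ (le_of_lt (B_pos z))]
  refine ⟨?_, habs⟩
  rw [hpsi, gfun_eq_GG p hz0 hz1, funext hterm]
  exact hsum
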